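/- Let (W, θ) be a TLN with uniform input θ > 0 whose node set is partitioned into components τ_1, ..., τ_N, each simply-embedded in (W, θ). For σ ⊆ [n] write σ_ℓ = σ ∩ τ_ℓ. Then for any ℓ with σ_ℓ ≠ ∅ and any i, j ∈ τ_ℓ: sgn s_i^σ = sgn s_j^σ if and only if sgn s_i^{σ_ℓ} = sgn s_j^{σ_ℓ}, provided the relevant Cramer determinants are nonzero (nondegeneracy). -/

import Mathlib

/-- Cramer's determinant s_i^σ = det((I - W_{σ∪{i}})_i ; θ·𝟙). -/
noncomputable def sdet {ι : Type*} [Fintype ι] [DecidableEq ι]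
    (W : Matrix ι ι ℝ) (θ : ℝ) (σ : Finset ι) (i : ι) : ℝ :=
  Matrix.det (Matrix.of (fun a b : {x // x ∈ insert i σ} =>
    if (b : ι) = i then θ
    else (if (a : ι) = (b : ι) then (1 : ℝ) else 0) - W (a : ι) (b : ι)))

open Matrix

lemma det_row_reduce_factor {ι : Type*} [Fintype ι] [DecidableEq ι]
    (M : Matrix ι ι ℝ) (p : ι → Prop) [DecidablePred p] (i₀ : ι) (hp : p i₀)
    (h : ∀ a b, ¬ p a → p b → M a b = M i₀ b) :
    M.det = (Matrix.toSquareBlockProp M p).det *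
      (Matrix.of fun a b : {x // ¬ p x} => M a b - M i₀ b).det := by
  classical
  set u : ι → ℝ := fun a => if p a then 0 else (-1) with hu
  set v : ι → ℝ := fun b => if b = i₀ then 1 else 0 with hv
  set L : Matrix ι ι ℝ := 1 + Matrix.replicateCol Unit u * Matrix.replicateRow Unit v with hL
  have hdetL : L.det = 1 := by
    rw [hL, Matrix.det_one_add_replicateCol_mul_replicateRow]
    have : (v ⬝ᵥ u) = 0 := by
      rw [dotProduct]
      apply Finset.sum_eq_zero
      intro x _
      by_cases hx : x = i₀
      · subst hx; simp [hu, hv, hp]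
      · simp [hv, hx]
    rw [this, add_zero]
  have hLM : ∀ a b, (L * M) a b = M a b + u a * M i₀ b := by
    intro a b
    simp only [hL, Matrix.add_mul, Matrix.one_mul, Matrix.add_apply]
    congr 1
    rw [Matrix.mul_apply]
    by_cases hpa : p a <;>
      simp [Matrix.mul_apply, hu, hv, hpa, ite_mul, mul_ite, Finset.sum_ite_eq']
  have hdet : M.det = (L * M).det := by rw [Matrix.det_mul, hdetL, one_mul]
  rw [hdet, Matrix.twoBlockTriangular_det (L * M) p ?_]
  · have hA : Matrix.toSquareBlockProp (L * M) p = Matrix.toSquareBlockProp M p := by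
      ext a b
      simp [Matrix.toSquareBlockProp, hLM, hu, a.2]
    have hB : (Matrix.toSquareBlockProp (L * M) fun a => ¬ p a) =
        Matrix.of fun a b : {x // ¬ p x} => M a b - M i₀ b := by
      ext a b
      simp only [Matrix.toSquareBlockProp, Matrix.toBlock_apply, Matrix.of_apply]
      rw [hLM]
      simp only [hu, if_neg a.2]
      ring
    rw [hA, hB]
  · intro a ha b hb
    rw [hLM]
    simp only [hu, if_neg ha]
    rw [h a b ha hb]; ring

lemma sdet_factor {n : ℕ} (W : Matrix (Fin n) (Fin n) ℝ) (θ : ℝ)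
    (t : Finset (Fin n))
    (hse : ∀ j ∉ t, ∀ i ∈ t, ∀ k ∈ t, W i j = W k j)
    (σ : Finset (Fin n)) (i : Fin n) (hi : i ∈ t) :
    θ * sdet W θ σ i = sdet W θ (σ ∩ t) i * sdet W θ (σ \ t) i := by
  classical
  set M : Matrix {x // x ∈ insert i σ} {x // x ∈ insert i σ} ℝ :=
    Matrix.of (fun a b : {x // x ∈ insert i σ} =>
      if (b : Fin n) = i then θ
      else (if (a : Fin n) = (b : Fin n) then (1:ℝ) else 0) - W a b) with hMdef
  set p : {x // x ∈ insert i σ} → Prop :=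
    fun a => (a : Fin n) = i ∨ (a : Fin n) ∉ t with hpdef
  have i₀mem : i ∈ insert i σ := Finset.mem_insert_self i σ
  have hfac := det_row_reduce_factor M p ⟨i, i₀mem⟩ (Or.inl rfl) (by
    intro a b ha hb
    have hai : (a : Fin n) ≠ i := fun h => ha (Or.inl h)
    have hat : (a : Fin n) ∈ t := by by_contra h; exact ha (Or.inr h)
    have hne : (a : Fin n) ≠ (b : Fin n) := by
      rcases hb with hb | hb
      · rw [hb]; exact hai
      · intro hab; rw [hab] at hat; exact hb hat
    rcases hb with hb | hb
    · simp [hMdef, hb]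
    · have hbi : (b : Fin n) ≠ i := by intro hbi; rw [hbi] at hb; exact hb hi
      have hib : i ≠ (b : Fin n) := fun h' => hbi h'.symm
      simp only [hMdef, Matrix.of_apply, if_neg hbi, if_neg hne, if_neg hib]
      rw [hse b hb a hat i hi])
  -- identify the p-block with sdet W θ (σ \ t) i
  set M₃ : Matrix {x // x ∈ insert i (σ \ t)} {x // x ∈ insert i (σ \ t)} ℝ :=
    Matrix.of (fun a b : {x // x ∈ insert i (σ \ t)} =>
      if (b : Fin n) = i then θ
      else (if (a : Fin n) = (b : Fin n) then (1:ℝ) else 0) - W a b) with hM₃def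
  let e₁ : {a : {x // x ∈ insert i σ} // p a} ≃ {x // x ∈ insert i (σ \ t)} :=
    { toFun := fun a => ⟨a.1.1, by
        rcases a.2 with h | h
        · rw [h]; exact Finset.mem_insert_self _ _
        · rcases Finset.mem_insert.mp a.1.2 with h' | h'
          · rw [h']; exact Finset.mem_insert_self _ _
          · exact Finset.mem_insert_of_mem (Finset.mem_sdiff.mpr ⟨h', h⟩)⟩
      invFun := fun x => ⟨⟨x.1, by
        rcases Finset.mem_insert.mp x.2 with h' | h'
        · rw [h']; exact Finset.mem_insert_self _ _
        · exact Finset.mem_insert_of_mem (Finset.mem_sdiff.mp h').1⟩, by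
        rcases Finset.mem_insert.mp x.2 with h' | h'
        · exact Or.inl h'
        · exact Or.inr (Finset.mem_sdiff.mp h').2⟩
      left_inv := fun a => Subtype.ext (Subtype.ext rfl)
      right_inv := fun x => Subtype.ext rfl }
  have hblock₁ : (Matrix.toSquareBlockProp M p).det = sdet W θ (σ \ t) i := by
    have : Matrix.toSquareBlockProp M p = M₃.submatrix e₁ e₁ := by
      ext a b
      rcases a with ⟨⟨a, hmem⟩, hpa⟩
      rcases b with ⟨⟨b, hmemb⟩, hpb⟩
      rfl
    rw [this, Matrix.det_submatrix_equiv_self]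
    rfl
  -- second factorization for σ ∩ t
  set M₂ : Matrix {x // x ∈ insert i (σ ∩ t)} {x // x ∈ insert i (σ ∩ t)} ℝ :=
    Matrix.of (fun a b : {x // x ∈ insert i (σ ∩ t)} =>
      if (b : Fin n) = i then θ
      else (if (a : Fin n) = (b : Fin n) then (1:ℝ) else 0) - W a b) with hM₂def
  set p₂ : {x // x ∈ insert i (σ ∩ t)} → Prop := fun a => (a : Fin n) = i with hp₂def
  have i₀mem₂ : i ∈ insert i (σ ∩ t) := Finset.mem_insert_self _ _
  have hfac₂ := det_row_reduce_factor M₂ p₂ ⟨i, i₀mem₂⟩ rfl (by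
    intro a b _ hb
    have hb' : (b : Fin n) = i := hb
    simp [hM₂def, hb'])
  -- the p₂-block is the 1×1 matrix (θ)
  letI : Unique {a : {x // x ∈ insert i (σ ∩ t)} // p₂ a} :=
    { default := ⟨⟨i, i₀mem₂⟩, rfl⟩
      uniq := by rintro ⟨⟨x, hx⟩, h⟩; exact Subtype.ext (Subtype.ext h) }
  have hblock₂ : (Matrix.toSquareBlockProp M₂ p₂).det = θ := by
    rw [Matrix.det_unique]
    show M₂ ⟨i, i₀mem₂⟩ ⟨i, i₀mem₂⟩ = θ
    simp [hM₂def]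
  -- the complementary blocks agree
  let e₂ : {a : {x // x ∈ insert i (σ ∩ t)} // ¬ p₂ a} ≃ {a : {x // x ∈ insert i σ} // ¬ p a} :=
    { toFun := fun a => ⟨⟨a.1.1, by
        rcases Finset.mem_insert.mp a.1.2 with h' | h'
        · exact absurd h' a.2
        · exact Finset.mem_insert_of_mem (Finset.mem_inter.mp h').1⟩, by
        rcases Finset.mem_insert.mp a.1.2 with h' | h'
        · exact absurd h' a.2
        · rintro (hc | hc)
          · exact a.2 hc
          · exact hc (Finset.mem_inter.mp h').2⟩
      invFun := fun a => ⟨⟨a.1.1, by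
        have hai : (a.1 : Fin n) ≠ i := fun h => a.2 (Or.inl h)
        have hat : (a.1 : Fin n) ∈ t := by by_contra h; exact a.2 (Or.inr h)
        rcases Finset.mem_insert.mp a.1.2 with h' | h'
        · exact absurd h' hai
        · exact Finset.mem_insert_of_mem (Finset.mem_inter.mpr ⟨h', hat⟩)⟩,
        fun h => a.2 (Or.inl h)⟩
      left_inv := fun a => Subtype.ext (Subtype.ext rfl)
      right_inv := fun a => Subtype.ext (Subtype.ext rfl) }
  have hAeq : (Matrix.of fun a b : {a : {x // x ∈ insert i (σ ∩ t)} // ¬ p₂ a} =>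
        M₂ a.1 b.1 - M₂ ⟨i, i₀mem₂⟩ b.1).det =
      (Matrix.of fun a b : {a : {x // x ∈ insert i σ} // ¬ p a} =>
        M a.1 b.1 - M ⟨i, i₀mem⟩ b.1).det := by
    have : (Matrix.of fun a b : {a : {x // x ∈ insert i (σ ∩ t)} // ¬ p₂ a} =>
        M₂ a.1 b.1 - M₂ ⟨i, i₀mem₂⟩ b.1) =
        (Matrix.of fun a b : {a : {x // x ∈ insert i σ} // ¬ p a} =>
        M a.1 b.1 - M ⟨i, i₀mem⟩ b.1).submatrix e₂ e₂ := by
      ext a b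
      rcases a with ⟨⟨a, hmem⟩, hpa⟩
      rcases b with ⟨⟨b, hmemb⟩, hpb⟩
      rfl
    rw [this, Matrix.det_submatrix_equiv_self]
  have hsσ : sdet W θ σ i = M.det := rfl
  have hsσt : sdet W θ (σ ∩ t) i = M₂.det := rfl
  rw [hsσ, hsσt, hfac, hfac₂, hblock₁, hblock₂, hAeq]
  ring

lemma sdet_outside_congr {n : ℕ} (W : Matrix (Fin n) (Fin n) ℝ) (θ : ℝ)
    (t : Finset (Fin n))
    (hse : ∀ j ∉ t, ∀ i ∈ t, ∀ k ∈ t, W i j = W k j)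
    (r : Finset (Fin n)) (hr : ∀ x ∈ r, x ∉ t)
    (i : Fin n) (hi : i ∈ t) (j : Fin n) (hj : j ∈ t) :
    sdet W θ r i = sdet W θ r j := by
  classical
  set Mi : Matrix {x // x ∈ insert i r} {x // x ∈ insert i r} ℝ :=
    Matrix.of (fun a b : {x // x ∈ insert i r} =>
      if (b : Fin n) = i then θ
      else (if (a : Fin n) = (b : Fin n) then (1:ℝ) else 0) - W a b) with hMi
  set Mj : Matrix {x // x ∈ insert j r} {x // x ∈ insert j r} ℝ :=
    Matrix.of (fun a b : {x // x ∈ insert j r} =>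
      if (b : Fin n) = j then θ
      else (if (a : Fin n) = (b : Fin n) then (1:ℝ) else 0) - W a b) with hMj
  set f : Fin n → Fin n := fun x => if x = j then i else x with hfd
  set g : Fin n → Fin n := fun x => if x = i then j else x with hgd
  have hmemr : ∀ x : Fin n, x ∈ insert j r → x ≠ j → x ∈ r := by
    intro x hx hxj
    rcases Finset.mem_insert.mp hx with h | h
    · exact absurd h hxj
    · exact h
  have hmemr' : ∀ x : Fin n, x ∈ insert i r → x ≠ i → x ∈ r := by
    intro x hx hxi
    rcases Finset.mem_insert.mp hx with h | h
    · exact absurd h hxi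
    · exact h
  have hf : ∀ x : Fin n, x ∈ insert j r → f x ∈ insert i r := by
    intro x hx
    by_cases h : x = j
    · simp only [hfd, if_pos h]; exact Finset.mem_insert_self _ _
    · simp only [hfd, if_neg h]; exact Finset.mem_insert_of_mem (hmemr x hx h)
  have hg : ∀ x : Fin n, x ∈ insert i r → g x ∈ insert j r := by
    intro x hx
    by_cases h : x = i
    · simp only [hgd, if_pos h]; exact Finset.mem_insert_self _ _
    · simp only [hgd, if_neg h]; exact Finset.mem_insert_of_mem (hmemr' x hx h)
  let e : {x // x ∈ insert j r} ≃ {x // x ∈ insert i r} :=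
    { toFun := fun x => ⟨f x, hf x x.2⟩
      invFun := fun x => ⟨g x, hg x x.2⟩
      left_inv := by
        rintro ⟨x, hx⟩
        apply Subtype.ext
        show g (f x) = x
        by_cases h : x = j
        · subst h; simp [hfd, hgd]
        · have hxr : x ∈ r := hmemr x hx h
          have hxi : x ≠ i := fun hc => (hr x hxr) (hc ▸ hi)
          simp only [hfd, hgd, if_neg h, if_neg hxi]
      right_inv := by
        rintro ⟨x, hx⟩
        apply Subtype.ext
        show f (g x) = x
        by_cases h : x = i
        · subst h; simp [hfd, hgd]
        · have hxr : x ∈ r := hmemr' x hx h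
          have hxj : x ≠ j := fun hc => (hr x hxr) (hc ▸ hj)
          simp only [hfd, hgd, if_neg h, if_neg hxj] }
  have hmat : Mj = Mi.submatrix e e := by
    ext a b
    rcases a with ⟨a, ha⟩
    rcases b with ⟨b, hb⟩
    show (if b = j then θ else (if a = b then (1:ℝ) else 0) - W a b) =
      (if f b = i then θ else (if f a = f b then (1:ℝ) else 0) - W (f a) (f b))
    by_cases hbj : b = j
    · simp only [hfd, if_pos hbj, if_pos rfl]
      simp
    · have hbr : b ∈ r := hmemr b hb hbj
      have hbt : b ∉ t := hr b hbr
      have hbi : b ≠ i := fun hc => hbt (hc ▸ hi)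
      have hfb : f b = b := by simp only [hfd, if_neg hbj]
      rw [hfb, if_neg hbj, if_neg hbi]
      by_cases haj : a = j
      · have hfa : f a = i := by simp only [hfd, if_pos haj]
        rw [hfa]
        have hib : i ≠ b := fun hc => hbi hc.symm
        have hab : a ≠ b := by rw [haj]; exact fun hc => hbj hc.symm
        rw [if_neg hib, if_neg hab]
        rw [hse b hbt i hi a (by rw [haj]; exact hj)]
      · have hfa : f a = a := by simp only [hfd, if_neg haj]
        rw [hfa]
  show Mi.det = Mj.det
  rw [hmat, Matrix.det_submatrix_equiv_self]

lemma real_sign_eq_iff {x y : ℝ} (hx : x ≠ 0) (hy : y ≠ 0) :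
    Real.sign x = Real.sign y ↔ 0 < x * y := by
  rcases hx.lt_or_gt with h1 | h1 <;> rcases hy.lt_or_gt with h2 | h2
  · simp only [Real.sign_of_neg h1, Real.sign_of_neg h2, eq_self_iff_true, true_iff]
    exact mul_pos_of_neg_of_neg h1 h2
  · simp only [Real.sign_of_neg h1, Real.sign_of_pos h2]
    constructor
    · intro h; norm_num at h
    · intro h; nlinarith
  · simp only [Real.sign_of_pos h1, Real.sign_of_neg h2]
    constructor
    · intro h; norm_num at h
    · intro h; nlinarith
  · simp only [Real.sign_of_pos h1, Real.sign_of_pos h2, eq_self_iff_true, true_iff]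
    exact mul_pos h1 h2

/-- Sign inheritance for simply-embedded partitions: if the nodes of a nondegenerate
TLN (W, θ) with uniform input θ > 0 are partitioned into components τ_1,...,τ_N each
simply-embedded in (W, θ), then for any σ ⊆ [n], any component ℓ with σ ∩ τ_ℓ ≠ ∅,
and any i, j ∈ τ_ℓ: sgn s_i^σ = sgn s_j^σ ⟺ sgn s_i^{σ∩τ_ℓ} = sgn s_j^{σ∩τ_ℓ}. -/
theorem simply_embedded_sign_inheritance (n N : ℕ)
    (W : Matrix (Fin n) (Fin n) ℝ) (θ : ℝ) (hθ : 0 < θ)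
    (τ : Fin N → Finset (Fin n))
    (hdisj : ∀ ℓ ℓ', ℓ ≠ ℓ' → Disjoint (τ ℓ) (τ ℓ'))
    (hcover : ∀ i : Fin n, ∃ ℓ, i ∈ τ ℓ)
    (hse : ∀ ℓ, ∀ j ∉ τ ℓ, ∀ i ∈ τ ℓ, ∀ k ∈ τ ℓ, W i j = W k j)
    (hnd : ∀ (ρ : Finset (Fin n)) (i : Fin n), sdet W θ ρ i ≠ 0)
    (σ : Finset (Fin n)) (ℓ : Fin N) (hℓ : (σ ∩ τ ℓ).Nonempty) :
    ∀ i ∈ τ ℓ, ∀ j ∈ τ ℓ,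
      (Real.sign (sdet W θ σ i) = Real.sign (sdet W θ σ j) ↔
        Real.sign (sdet W θ (σ ∩ τ ℓ) i) = Real.sign (sdet W θ (σ ∩ τ ℓ) j)) := by
  intro i hi j hj
  have hse' := hse ℓ
  have K_i := sdet_factor W θ (τ ℓ) hse' σ i hi
  have K_j := sdet_factor W θ (τ ℓ) hse' σ j hj
  have hD : sdet W θ (σ \ τ ℓ) i = sdet W θ (σ \ τ ℓ) j :=
    sdet_outside_congr W θ (τ ℓ) hse' (σ \ τ ℓ)
      (fun x hx => (Finset.mem_sdiff.mp hx).2) i hi j hj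
  have hθ' : θ ≠ 0 := ne_of_gt hθ
  set A := sdet W θ σ i with hA
  set B := sdet W θ σ j with hB
  set C := sdet W θ (σ ∩ τ ℓ) i with hC
  set D := sdet W θ (σ ∩ τ ℓ) j with hD2
  have P : A * D = B * C := by
    apply mul_left_cancel₀ hθ'
    calc θ * (A * D) = (θ * A) * D := by ring
      _ = (C * sdet W θ (σ \ τ ℓ) i) * D := by rw [K_i]
      _ = (D * sdet W θ (σ \ τ ℓ) j) * C := by rw [hD]; ring
      _ = (θ * B) * C := by rw [K_j]
      _ = θ * (B * C) := by ring
  have hA0 : A ≠ 0 := hnd σ i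
  have hB0 : B ≠ 0 := hnd σ j
  have hC0 : C ≠ 0 := hnd (σ ∩ τ ℓ) i
  have hD0 : D ≠ 0 := hnd (σ ∩ τ ℓ) j
  rw [real_sign_eq_iff hA0 hB0, real_sign_eq_iff hC0 hD0]
  have hsq : (A * B) * (C * D) = (A * D) ^ 2 := by linear_combination (-(A * D)) * P
  have hpos : 0 < (A * B) * (C * D) := by
    rw [hsq]
    exact pow_two_pos_of_ne_zero (mul_ne_zero hA0 hD0)
  constructor
  · intro h
    rcases mul_pos_iff.mp hpos with ⟨_, h2⟩ | ⟨h1, _⟩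
    · exact h2
    · linarith
  · intro h
    rcases mul_pos_iff.mp hpos with ⟨h1, _⟩ | ⟨_, h2⟩
    · exact h1
    · linarith
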